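/- Let λ, λ̃, μ, θ, ψ > 0 with λ = λ̃, and define π(n,1) = K · e^{−λ/μ}(λ/μ)^n/n! · (μθ/(μθ+λψ)) and π(n,0) = K · e^{−λ/μ}(λ/μ)^{n−1}/(n−1)! · (λψ/(μθ+λψ)) for n ≥ 1 (with π(0,0)=0), K a normalizing constant equal to 1. Then these probabilities satisfy the steady-state master equation: for all n ≥ 1, π(n,1)(n(ψ+μ)+λ) = π(n−1,1)λ + π(n+1,1)(n+1)μ + π(n,0)θ, and π(n,0)((n−1)μ+θ+λ) = π(n−1,0)λ + π(n+1,0)nμ + π(n,1)ψn, and in particular P{A=1} = ∑_n π(n,1) = μθ/(μθ+λψ). -/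

import Mathlib

/-- For `λ = λ̃` the Poisson/shifted-Poisson distribution solves the steady-state master
equation of the self-regulating gene, and `P{A=1} = μθ/(μθ+λψ)`. -/
theorem stmt6 (lam μ θ ψ : ℝ) (hlam : 0 < lam) (hμ : 0 < μ) (hθ : 0 < θ) (hψ : 0 < ψ)
    (π1 π0 : ℕ → ℝ)
    (hπ1 : ∀ n, π1 n = Real.exp (-(lam / μ)) * (lam / μ) ^ n / (Nat.factorial n)
        * (μ * θ / (μ * θ + lam * ψ)))
    (hπ0 : ∀ n, π0 n = if n = 0 then 0 else
        Real.exp (-(lam / μ)) * (lam / μ) ^ (n - 1) / (Nat.factorial (n - 1))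
          * (lam * ψ / (μ * θ + lam * ψ))) :
    (∀ n : ℕ, 1 ≤ n →
        π1 n * (n * (ψ + μ) + lam)
          = π1 (n - 1) * lam + π1 (n + 1) * (n + 1) * μ + π0 n * θ) ∧
    (∀ n : ℕ, 1 ≤ n →
        π0 n * (((n : ℝ) - 1) * μ + θ + lam)
          = π0 (n - 1) * lam + π0 (n + 1) * n * μ + π1 n * ψ * n) ∧
    (∑' n, π1 n) = μ * θ / (μ * θ + lam * ψ) := by
  have hS : μ * θ + lam * ψ ≠ 0 := by positivity
  have hμ' : μ ≠ 0 := ne_of_gt hμ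
  refine ⟨?_, ?_, ?_⟩
  · rintro n hn
    obtain ⟨m, rfl⟩ : ∃ m, n = m + 1 := ⟨n - 1, by omega⟩
    have hfm : (Nat.factorial m : ℝ) ≠ 0 := Nat.cast_ne_zero.mpr (Nat.factorial_ne_zero m)
    have h1 : (m : ℝ) + 1 ≠ 0 := by positivity
    have h2 : (m : ℝ) + 2 ≠ 0 := by positivity
    simp only [hπ1, hπ0, Nat.add_sub_cancel, Nat.factorial_succ, Nat.succ_ne_zero,
      if_false, pow_succ, Nat.cast_mul, Nat.cast_add, Nat.cast_one, Nat.cast_ofNat]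
    field_simp
    ring
  · rintro n hn
    obtain ⟨m, rfl⟩ : ∃ m, n = m + 1 := ⟨n - 1, by omega⟩
    match m with
    | 0 =>
      simp only [hπ1, hπ0]
      norm_num [Nat.factorial]
      field_simp
      ring
    | Nat.succ k =>
      have hfk : (Nat.factorial k : ℝ) ≠ 0 := Nat.cast_ne_zero.mpr (Nat.factorial_ne_zero k)
      have h1 : (k : ℝ) + 1 ≠ 0 := by positivity
      have h2 : (k : ℝ) + 2 ≠ 0 := by positivity
      simp only [hπ1, hπ0, Nat.add_sub_cancel, Nat.factorial_succ, Nat.succ_ne_zero,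
        if_false, pow_succ, Nat.cast_mul, Nat.cast_add, Nat.cast_one, Nat.cast_ofNat]
      push_cast
      field_simp
      ring
  · have hexp : (∑' n : ℕ, Real.exp (-(lam / μ)) * (lam / μ) ^ n / (Nat.factorial n))
        = 1 := by
      have h := NormedSpace.exp_eq_tsum_div (𝔸 := ℝ)
      have h2 : Real.exp (lam / μ) = ∑' n : ℕ, (lam / μ) ^ n / (Nat.factorial n) := by
        rw [Real.exp_eq_exp_ℝ, h]
      have h3 : (∑' n : ℕ, Real.exp (-(lam / μ)) * (lam / μ) ^ n / (Nat.factorial n))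
          = Real.exp (-(lam / μ)) * ∑' n : ℕ, (lam / μ) ^ n / (Nat.factorial n) := by
        rw [← tsum_mul_left]
        exact tsum_congr fun n => by ring
      rw [h3, ← h2, ← Real.exp_add]
      simp
    calc (∑' n, π1 n)
        = (∑' n : ℕ, Real.exp (-(lam / μ)) * (lam / μ) ^ n / (Nat.factorial n))
            * (μ * θ / (μ * θ + lam * ψ)) := by
          rw [← tsum_mul_right]; exact tsum_congr fun n => hπ1 n
      _ = μ * θ / (μ * θ + lam * ψ) := by rw [hexp, one_mul]
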